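/- arXiv:1806.02659 — 4 statements merged into one kernel-verified Lean document; each statement's English description precedes it below -/
import Mathlib

section
/- For any real numbers a, b > 0, the integral over λ from 0 to ∞ of (a / √(2πλ)) · exp(−(a²λ + b²λ⁻¹)/2) dλ equals exp(−|a·b|) = exp(−a·b). -/
open MeasureTheory Real Set

set_option maxHeartbeats 2000000 in
theorem andrews_mallows (a b : ℝ) (ha : 0 < a) (hb : 0 < b) :
    ∫ l in Ioi (0:ℝ), a / Real.sqrt (2 * π * l) *
      Real.exp (-(a ^ 2 * l + b ^ 2 * l⁻¹) / 2) = Real.exp (-(a * b)) := by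
  have h2π : (0:ℝ) < 2 * π := by positivity
  set g : ℝ → ℝ := fun l => Real.exp (-(a ^ 2 * l + b ^ 2 * l⁻¹) / 2) with hg
  set φ : ℝ → ℝ := fun l => a * Real.sqrt l - b / Real.sqrt l with hφdef
  set φd : ℝ → ℝ := fun l => a / (2 * Real.sqrt l) + b / (2 * l * Real.sqrt l) with hφd
  set h1 : ℝ → ℝ := fun l => (a / Real.sqrt l + b / (l * Real.sqrt l)) * g l with hh1
  set h2 : ℝ → ℝ := fun l => (a / Real.sqrt l - b / (l * Real.sqrt l)) * g l with hh2
  -- derivative of φ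
  have hφ' : ∀ l ∈ Ioi (0:ℝ), HasDerivWithinAt φ (φd l) (Ioi (0:ℝ)) l := by
    intro l hl
    have hl0 : (0:ℝ) < l := hl
    have hsl : 0 < Real.sqrt l := Real.sqrt_pos.2 hl0
    have h1' : HasDerivAt (fun l => a * Real.sqrt l) (a * (1 / (2 * Real.sqrt l))) l :=
      (Real.hasDerivAt_sqrt hl0.ne').const_mul a
    have h2' : HasDerivAt (fun l => b / Real.sqrt l)
        ((0 * Real.sqrt l - b * (1 / (2 * Real.sqrt l))) / (Real.sqrt l)^2) l :=
      (hasDerivAt_const l b).div (Real.hasDerivAt_sqrt hl0.ne') hsl.ne'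
    have h3 := h1'.sub h2'
    have : HasDerivAt φ (φd l) l := by
      refine h3.congr_deriv ?_
      simp only [hφd]
      field_simp
      rw [Real.sq_sqrt hl0.le]; ring
    exact this.hasDerivWithinAt
  -- φ strictly monotone hence injective on Ioi 0
  have hmono : StrictMonoOn φ (Ioi (0:ℝ)) := by
    intro x hx y hy hxy
    have hx0 : (0:ℝ) < x := hx
    have hy0 : (0:ℝ) < y := hy
    have hsx : 0 < Real.sqrt x := Real.sqrt_pos.2 hx0
    have hsy : 0 < Real.sqrt y := Real.sqrt_pos.2 hy0
    have hs : Real.sqrt x < Real.sqrt y := Real.sqrt_lt_sqrt hx0.le hxy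
    have hA : a * Real.sqrt x < a * Real.sqrt y := by nlinarith
    have hB : b / Real.sqrt y < b / Real.sqrt x := div_lt_div_of_pos_left hb hsx hs
    simp only [hφdef]
    linarith
  have hinj : InjOn φ (Ioi (0:ℝ)) := hmono.injOn
  -- φ is surjective onto ℝ
  have himg : φ '' Ioi (0:ℝ) = univ := by
    apply eq_univ_of_forall
    intro t
    have h4ab : (0:ℝ) < t ^ 2 + 4 * (a * b) := by positivity
    set s := Real.sqrt (t ^ 2 + 4 * (a * b)) with hs
    have hs2 : s ^ 2 = t ^ 2 + 4 * (a * b) := Real.sq_sqrt h4ab.le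
    have hs0 : 0 ≤ s := Real.sqrt_nonneg _
    have hts : -t < s := by nlinarith
    have hts0 : (0:ℝ) < t + s := by linarith
    set u := (t + s) / (2 * a) with hu
    have hu0 : 0 < u := div_pos hts0 (by linarith)
    refine ⟨u ^ 2, mem_Ioi.2 (pow_pos hu0 2), ?_⟩
    have hsu : Real.sqrt (u ^ 2) = u := Real.sqrt_sq hu0.le
    simp only [hφdef, hsu]
    rw [hu]
    field_simp
    nlinarith [hs2]
  -- change of variables: Gaussian
  have key : ∫ t : ℝ, Real.exp (-(t ^ 2) / 2)
      = ∫ l in Ioi (0:ℝ), |φd l| * Real.exp (-(φ l) ^ 2 / 2) := by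
    have h := integral_image_eq_integral_abs_deriv_smul measurableSet_Ioi hφ' hinj
      (fun t => Real.exp (-(t ^ 2) / 2))
    rw [himg] at h
    simpa [smul_eq_mul] using h
  have hgauss : ∫ t : ℝ, Real.exp (-(t ^ 2) / 2) = Real.sqrt (2 * π) := by
    have h := integral_gaussian (1/2 : ℝ)
    rw [show (π / (1/2 : ℝ)) = 2 * π by ring] at h
    rw [← h]
    congr 1
    ext t
    congr 1
    ring
  -- pointwise identity on Ioi 0
  have hpt1 : ∀ l ∈ Ioi (0:ℝ),
      |φd l| * Real.exp (-(φ l) ^ 2 / 2) = (Real.exp (a * b) / 2) * h1 l := by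
    intro l hl
    have hl0 : (0:ℝ) < l := hl
    have hsl : 0 < Real.sqrt l := Real.sqrt_pos.2 hl0
    have hsq : (Real.sqrt l) ^ 2 = l := Real.sq_sqrt hl0.le
    have hφdpos : 0 < φd l := by
      simp only [hφd]
      exact add_pos (div_pos ha (by linarith)) (div_pos hb (by nlinarith))
    rw [abs_of_pos hφdpos]
    have hexp : Real.exp (-(φ l) ^ 2 / 2) = Real.exp (a * b) * g l := by
      rw [hg, ← Real.exp_add]
      congr 1
      have hid : (φ l) ^ 2 = a ^ 2 * l + b ^ 2 * l⁻¹ - 2 * (a * b) := by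
        simp only [hφdef]
        field_simp
        linear_combination (a^2*(Real.sqrt l)^2*l - b^2) * hsq
      rw [hid]; ring
    rw [hexp]
    simp only [hh1, hφd, hg]
    field_simp
  -- integrability of h1
  have hint_aux : IntegrableOn (fun l => |φd l| * Real.exp (-(φ l) ^ 2 / 2)) (Ioi (0:ℝ)) := by
    have hgint : Integrable (fun t : ℝ => Real.exp (-(t ^ 2) / 2)) := by
      have h := integrable_exp_neg_mul_sq (show (0:ℝ) < 1/2 by norm_num)
      convert h using 2 with t
      ring
    have h := (integrableOn_image_iff_integrableOn_abs_deriv_smul measurableSet_Ioi hφ' hinj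
      (fun t => Real.exp (-(t ^ 2) / 2))).1
    rw [himg] at h
    simpa [smul_eq_mul] using h hgint.integrableOn
  have hh2meas : Measurable h2 := by
    simp only [hh2, hg]
    fun_prop
  have hint1 : IntegrableOn h1 (Ioi (0:ℝ)) := by
    have h : IntegrableOn (fun l => 2 * Real.exp (-(a * b)) *
        (|φd l| * Real.exp (-(φ l) ^ 2 / 2))) (Ioi (0:ℝ)) := hint_aux.const_mul _
    apply IntegrableOn.congr_fun h _ measurableSet_Ioi
    intro l hl
    show 2 * Real.exp (-(a * b)) * (|φd l| * Real.exp (-(φ l) ^ 2 / 2)) = h1 l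
    rw [hpt1 l hl, Real.exp_neg]
    field_simp [Real.exp_ne_zero]
  have hI1 : ∫ l in Ioi (0:ℝ), h1 l = 2 * Real.exp (-(a * b)) * Real.sqrt (2 * π) := by
    have heq : ∫ l in Ioi (0:ℝ), h1 l
        = ∫ l in Ioi (0:ℝ), 2 * Real.exp (-(a * b)) * (|φd l| * Real.exp (-(φ l) ^ 2 / 2)) := by
      apply setIntegral_congr_fun measurableSet_Ioi
      intro l hl
      show h1 l = 2 * Real.exp (-(a * b)) * (|φd l| * Real.exp (-(φ l) ^ 2 / 2))
      rw [hpt1 l hl, Real.exp_neg]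
      field_simp [Real.exp_ne_zero]
    rw [heq, integral_const_mul, ← key, hgauss]
  -- odd part vanishes via the involution l ↦ (b/a)^2 / l
  have hI2 : ∫ l in Ioi (0:ℝ), h2 l = 0 := by
    set c : ℝ := (b / a) ^ 2 with hc
    have hc0 : 0 < c := by positivity
    set ψ : ℝ → ℝ := fun l => c / l with hψ
    have hψ' : ∀ l ∈ Ioi (0:ℝ), HasDerivWithinAt ψ (-(c / l ^ 2)) (Ioi (0:ℝ)) l := by
      intro l hl
      have hl0 : (0:ℝ) < l := hl
      have hd : HasDerivAt ψ (c * -(l ^ 2)⁻¹) l := (hasDerivAt_inv hl0.ne').const_mul c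
      have hd2 : HasDerivAt ψ (-(c / l ^ 2)) l := by
        convert hd using 1; field_simp
      exact hd2.hasDerivWithinAt
    have hψinj : InjOn ψ (Ioi (0:ℝ)) := by
      intro x hx y hy hxy
      have hx0 : (0:ℝ) < x := hx
      have hy0 : (0:ℝ) < y := hy
      simp only [hψ] at hxy
      field_simp at hxy
      linarith
    have hψimg : ψ '' Ioi (0:ℝ) = Ioi (0:ℝ) := by
      apply Subset.antisymm
      · rintro _ ⟨x, hx, rfl⟩
        exact div_pos hc0 hx
      · intro y hy
        exact ⟨c / y, div_pos hc0 hy, by simp only [hψ]; field_simp⟩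
    have hcov : ∫ l in Ioi (0:ℝ), h2 l
        = ∫ l in Ioi (0:ℝ), |(-(c / l ^ 2))| * h2 (ψ l) := by
      have h := integral_image_eq_integral_abs_deriv_smul measurableSet_Ioi hψ' hψinj h2
      rw [hψimg] at h
      simpa [smul_eq_mul] using h
    have hpt2 : ∀ l ∈ Ioi (0:ℝ), |(-(c / l ^ 2))| * h2 (ψ l) = -h2 l := by
      intro l hl
      have hl0 : (0:ℝ) < l := hl
      obtain ⟨s, hs0, rfl⟩ : ∃ s : ℝ, 0 < s ∧ s ^ 2 = l :=
        ⟨Real.sqrt l, Real.sqrt_pos.2 hl0, Real.sq_sqrt hl0.le⟩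
      have hss : Real.sqrt (s ^ 2) = s := Real.sqrt_sq hs0.le
      have hsψ : Real.sqrt (c / s ^ 2) = b / a / s := by
        rw [show c / s ^ 2 = (b / a / s) ^ 2 by rw [div_pow, hc]]
        exact Real.sqrt_sq (div_nonneg (div_nonneg hb.le ha.le) hs0.le)
      have hgψ : g (c / s ^ 2) = g (s ^ 2) := by
        simp only [hg, hc]
        congr 2
        field_simp
        ring
      have e1 : h2 (ψ (s ^ 2)) = (a / (b / a / s)
          - b / ((c / s ^ 2) * (b / a / s))) * g (s ^ 2) := by
        simp only [hh2, hψ, hsψ, hgψ]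
      rw [abs_neg, abs_of_pos (div_pos hc0 (pow_pos hl0 2)), e1]
      simp only [hh2, hss, hc]
      field_simp
      ring
    rw [setIntegral_congr_fun measurableSet_Ioi hpt2, integral_neg] at hcov
    linarith
  -- integrability of h2 by domination
  have hint2 : IntegrableOn h2 (Ioi (0:ℝ)) := by
    refine MeasureTheory.Integrable.mono hint1 hh2meas.aestronglyMeasurable.restrict ?_
    filter_upwards [ae_restrict_mem measurableSet_Ioi] with l hl
    have hl0 : (0:ℝ) < l := hl
    have hsl : 0 < Real.sqrt l := Real.sqrt_pos.2 hl0
    have hgpos : 0 < g l := Real.exp_pos _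
    have hx : 0 < a / Real.sqrt l := div_pos ha hsl
    have hy : 0 < b / (l * Real.sqrt l) := div_pos hb (mul_pos hl0 hsl)
    simp only [hh1, hh2, Real.norm_eq_abs, abs_mul]
    have hb1 : |a / Real.sqrt l - b / (l * Real.sqrt l)|
        ≤ |a / Real.sqrt l + b / (l * Real.sqrt l)| := by
      rw [abs_of_pos (by linarith : (0:ℝ) < a / Real.sqrt l + b / (l * Real.sqrt l)), abs_le]
      constructor <;> linarith
    exact mul_le_mul_of_nonneg_right hb1 (abs_nonneg _)
  -- final assembly
  have hfin : ∀ l ∈ Ioi (0:ℝ), a / Real.sqrt (2 * π * l) *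
      Real.exp (-(a ^ 2 * l + b ^ 2 * l⁻¹) / 2)
      = (1 / (2 * Real.sqrt (2 * π))) * (h1 l + h2 l) := by
    intro l hl
    have hl0 : (0:ℝ) < l := hl
    have hsl : 0 < Real.sqrt l := Real.sqrt_pos.2 hl0
    have hs2π : 0 < Real.sqrt (2 * π) := Real.sqrt_pos.2 h2π
    rw [Real.sqrt_mul h2π.le]
    simp only [hh1, hh2, hg]
    field_simp
    ring
  rw [setIntegral_congr_fun measurableSet_Ioi hfin, integral_const_mul,
    integral_add hint1 hint2, hI1, hI2]
  have hs2π : 0 < Real.sqrt (2 * π) := Real.sqrt_pos.2 h2π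
  field_simp
  ring
end

section
/- For any real number b, the integral over λ from 0 to ∞ of (2πλ)^(−1/2) · exp(−(b + λ)²/(2λ)) dλ equals exp(−2·max{b, 0}). -/
open MeasureTheory Real Set

lemma inv_image (a : ℝ) (ha : 0 < a) : (fun t : ℝ => a / t) '' Ioi 0 = Ioi 0 := by
  ext y
  constructor
  · rintro ⟨t, ht, rfl⟩
    exact div_pos ha ht
  · intro hy
    exact ⟨a / y, div_pos ha hy, by field_simp⟩

lemma J_integrable (a : ℝ) (ha : 0 ≤ a) :
    IntegrableOn (fun t : ℝ => Real.exp (-(t - a/t)^2/2)) (Ioi 0) := by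
  have h : Integrable (fun t : ℝ => Real.exp a * Real.exp (-(1/2) * t^2)) :=
    (integrable_exp_neg_mul_sq (by norm_num)).const_mul _
  refine h.restrict.mono ?_ ?_
  · apply Measurable.aestronglyMeasurable
    exact Real.measurable_exp.comp
      ((((measurable_id.sub (measurable_const.div measurable_id)).pow_const 2).neg).div_const 2)
  · filter_upwards [ae_restrict_mem measurableSet_Ioi] with t ht
    have ht' : (0:ℝ) < t := ht
    have hta : t * (a / t) = a := mul_div_cancel₀ a (ne_of_gt ht')
    simp only [Real.norm_eq_abs, abs_of_pos (Real.exp_pos _), ← Real.exp_add]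
    apply Real.exp_le_exp.mpr
    nlinarith [sq_nonneg (a / t)]

lemma J_eval (a : ℝ) (ha : 0 ≤ a) :
    ∫ t in Ioi (0:ℝ), Real.exp (-(t - a/t)^2/2) = Real.sqrt (2*π) / 2 := by
  rcases eq_or_lt_of_le ha with rfl | ha'
  · have : ∀ t : ℝ, Real.exp (-(t - 0/t)^2/2) = Real.exp (-(1/2) * t^2) := by
      intro t; congr 1; rw [zero_div, sub_zero]; ring
    simp_rw [this]
    rw [integral_gaussian_Ioi]
    norm_num
    ring
  · -- a > 0
    set e : ℝ → ℝ := fun t => Real.exp (-(t - a/t)^2/2) with he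
    have hderiv_inv : ∀ t ∈ Ioi (0:ℝ),
        HasDerivWithinAt (fun t : ℝ => a / t) (-(a / t^2)) (Ioi 0) t := by
      intro t ht
      have h1 : HasDerivAt (fun t : ℝ => a / t) (-(a / t^2)) t := by
        simpa [div_eq_mul_inv, mul_neg] using
          ((hasDerivAt_inv (ne_of_gt (mem_Ioi.mp ht))).const_mul a)
      exact h1.hasDerivWithinAt
    have hinj_inv : InjOn (fun t : ℝ => a / t) (Ioi 0) := by
      intro x hx y hy h
      have hx' : (0:ℝ) < x := hx
      have hy' : (0:ℝ) < y := hy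
      have h' : a / x = a / y := h
      rw [div_eq_div_iff (ne_of_gt hx') (ne_of_gt hy')] at h'
      exact (mul_left_cancel₀ (ne_of_gt ha') h').symm
    have key : ∫ u in Ioi (0:ℝ), e u
        = ∫ t in Ioi (0:ℝ), (a/t^2) * e t := by
      calc ∫ u in Ioi (0:ℝ), e u
          = ∫ u in ((fun t : ℝ => a / t) '' Ioi 0), e u := by rw [inv_image a ha']
        _ = ∫ t in Ioi (0:ℝ), |(-(a / t^2))| • e (a/t) :=
            integral_image_eq_integral_abs_deriv_smul measurableSet_Ioi hderiv_inv hinj_inv e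
        _ = ∫ t in Ioi (0:ℝ), (a/t^2) * e t := by
            apply setIntegral_congr_fun measurableSet_Ioi
            intro t ht
            have ht' : (0:ℝ) < t := ht
            have h1 : a / (a / t) = t := by field_simp
            simp only [he, smul_eq_mul, abs_neg,
              abs_of_pos (div_pos ha' (pow_pos ht' 2)), h1]
            congr 2
            ring
    have hint2 : IntegrableOn (fun t : ℝ => (a/t^2) * e t) (Ioi 0) := by
      have h0 : IntegrableOn e ((fun t : ℝ => a / t) '' Ioi 0) := by
        rw [inv_image a ha']; exact J_integrable a ha
      have h1 := (integrableOn_image_iff_integrableOn_abs_deriv_smul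
        measurableSet_Ioi hderiv_inv hinj_inv e).mp h0
      refine h1.congr_fun ?_ measurableSet_Ioi
      intro t ht
      have ht' : (0:ℝ) < t := ht
      have h2 : a / (a / t) = t := by field_simp
      simp only [he, smul_eq_mul, abs_neg,
        abs_of_pos (div_pos ha' (pow_pos ht' 2)), h2]
      congr 2
      ring
    -- change of variables u = t - a/t
    have himg : (fun t : ℝ => t - a/t) '' Ioi 0 = univ := by
      apply eq_univ_of_forall
      intro y
      set s := Real.sqrt (y^2 + 4*a) with hs
      have hs2 : s ^ 2 = y^2 + 4*a := Real.sq_sqrt (by positivity)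
      have hys : |y| < s := by
        rw [hs, ← Real.sqrt_sq_eq_abs]
        exact Real.sqrt_lt_sqrt (sq_nonneg _) (by linarith)
      have ht0 : 0 < (y + s)/2 := by
        have := neg_abs_le y
        linarith
      refine ⟨(y + s)/2, ht0, ?_⟩
      have hys0 : (0:ℝ) < y + s := by linarith
      field_simp
      nlinarith [hs2]
    have hderiv : ∀ t ∈ Ioi (0:ℝ),
        HasDerivWithinAt (fun t : ℝ => t - a/t) (1 + a/t^2) (Ioi 0) t := by
      intro t ht
      have h1 : HasDerivAt (fun t : ℝ => t - a/t) (1 - (-(a / t^2))) t :=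
        (hasDerivAt_id t).sub (show HasDerivAt (fun t : ℝ => a / t) (-(a / t^2)) t by
          simpa [div_eq_mul_inv, mul_neg] using
            ((hasDerivAt_inv (ne_of_gt (mem_Ioi.mp ht))).const_mul a))
      have : (1 : ℝ) - (-(a / t^2)) = 1 + a/t^2 := by ring
      rw [this] at h1
      exact h1.hasDerivWithinAt
    have hinj : InjOn (fun t : ℝ => t - a/t) (Ioi 0) := by
      intro x hx y hy h
      have hx' : (0:ℝ) < x := hx
      have hy' : (0:ℝ) < y := hy
      have h' : (x - y) * (x*y + a) = 0 := by
        field_simp at h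
        nlinarith [h]
      rcases mul_eq_zero.mp h' with h'' | h''
      · linarith
      · nlinarith
    have gauss : ∫ x : ℝ, Real.exp (-(x^2)/2) = Real.sqrt (2*π) := by
      have : ∀ x : ℝ, Real.exp (-(x^2)/2) = Real.exp (-(1/2) * x^2) := by
        intro x; congr 1; ring
      simp_rw [this]
      rw [integral_gaussian]
      congr 1
      ring
    have main : Real.sqrt (2*π) = ∫ t in Ioi (0:ℝ), (1 + a/t^2) * e t := by
      rw [← gauss, ← setIntegral_univ, ← himg,
        integral_image_eq_integral_abs_deriv_smul measurableSet_Ioi hderiv hinj]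
      apply setIntegral_congr_fun measurableSet_Ioi
      intro t ht
      have ht' : (0:ℝ) < t := ht
      have hpos : 0 < 1 + a/t^2 := by positivity
      simp only [he, smul_eq_mul, abs_of_pos hpos]
    have hsplit : ∫ t in Ioi (0:ℝ), (1 + a/t^2) * e t
        = (∫ t in Ioi (0:ℝ), e t) + ∫ t in Ioi (0:ℝ), (a/t^2) * e t := by
      rw [← integral_add (J_integrable a ha) hint2]
      congr 1
      funext t
      ring
    have : Real.sqrt (2*π) = 2 * ∫ t in Ioi (0:ℝ), e t := by
      rw [main, hsplit, ← key]; ring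
    linarith [this]

theorem mixture_hinge (b : ℝ) :
    ∫ l in Ioi (0:ℝ), (2 * π * l) ^ (-(1:ℝ)/2) *
      Real.exp (-(b + l) ^ 2 / (2 * l)) = Real.exp (-2 * max b 0) := by
  have hsq : (fun t : ℝ => t^2) '' Ioi 0 = Ioi 0 := by
    ext y
    constructor
    · rintro ⟨t, ht, rfl⟩
      exact pow_pos (mem_Ioi.mp ht) 2
    · intro hy
      exact ⟨Real.sqrt y, Real.sqrt_pos.mpr hy, Real.sq_sqrt (le_of_lt hy)⟩
  have hderiv : ∀ t ∈ Ioi (0:ℝ), HasDerivWithinAt (fun t : ℝ => t^2) (2*t) (Ioi 0) t := by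
    intro t ht
    simpa using ((hasDerivAt_pow 2 t).hasDerivWithinAt (s := Ioi 0))
  have hinj : InjOn (fun t : ℝ => t^2) (Ioi 0) := by
    intro x hx y hy h
    have hx' : (0:ℝ) < x := hx
    have hy' : (0:ℝ) < y := hy
    have h' : x^2 = y^2 := h
    calc x = Real.sqrt (x^2) := (Real.sqrt_sq hx'.le).symm
      _ = Real.sqrt (y^2) := by rw [h']
      _ = y := Real.sqrt_sq hy'.le
  rw [← hsq, integral_image_eq_integral_abs_deriv_smul measurableSet_Ioi hderiv hinj]
  have hstep : ∀ t ∈ Ioi (0:ℝ),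
      |2*t| • ((2 * π * t^2) ^ (-(1:ℝ)/2) * Real.exp (-(b + t^2) ^ 2 / (2 * t^2)))
      = (2 * (2*π) ^ (-(1:ℝ)/2) * Real.exp (-2 * max b 0)) *
          Real.exp (-(t - |b|/t)^2/2) := by
    intro t ht
    have ht' : (0:ℝ) < t := ht
    have h2π : (0:ℝ) < 2 * π := by positivity
    have hsplit : (2 * π * t^2 : ℝ) ^ (-(1:ℝ)/2)
        = (2*π) ^ (-(1:ℝ)/2) * (t^2 : ℝ) ^ (-(1:ℝ)/2) :=
      Real.mul_rpow (le_of_lt h2π) (by positivity)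
    have ht2 : ((t:ℝ)^2) ^ (-(1:ℝ)/2) = t⁻¹ := by
      rw [← Real.rpow_natCast t 2, ← Real.rpow_mul (le_of_lt ht')]
      norm_num
      exact Real.rpow_neg_one t
    have hexp : -(b + t^2) ^ 2 / (2 * t^2) = -2 * max b 0 + (-(t - |b|/t)^2/2) := by
      rcases le_or_gt b 0 with hb | hb
      · rw [max_eq_right hb, abs_of_nonpos hb]
        field_simp
        ring
      · rw [max_eq_left (le_of_lt hb), abs_of_pos hb]
        field_simp
        ring
    rw [hexp, Real.exp_add, hsplit, ht2, smul_eq_mul, abs_of_pos (by positivity : (0:ℝ) < 2*t)]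
    field_simp
  rw [setIntegral_congr_fun measurableSet_Ioi hstep, integral_const_mul,
    J_eval |b| (abs_nonneg b)]
  have hrt : (2*π : ℝ) ^ (-(1:ℝ)/2) = (Real.sqrt (2*π))⁻¹ := by
    rw [Real.sqrt_eq_rpow, ← Real.rpow_neg (by positivity)]
    norm_num
  rw [hrt]
  have hne : Real.sqrt (2*π) ≠ 0 := by positivity
  field_simp
end

section
/- For any real numbers a, b with a > 0, the integral over λ from 0 to ∞ of (a/√(2πλ)) · exp(−(a²λ + b²/λ)/2) dλ equals exp(−a·|b|). -/
open MeasureTheory Real Set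

lemma am_integrable (K : ℝ) :
    IntegrableOn (fun v : ℝ => Real.exp (-(v - K / v) ^ 2 / 2)) (Ioi 0) := by
  have hg : Integrable (fun v : ℝ => Real.exp K * Real.exp (-(1/2 : ℝ) * v ^ 2)) :=
    (integrable_exp_neg_mul_sq (by norm_num : (0:ℝ) < 1/2)).const_mul _
  have hm : Measurable fun v : ℝ => Real.exp (-(v - K / v) ^ 2 / 2) := by
    have : Measurable fun v : ℝ => K / v := measurable_const.div measurable_id
    exact (((measurable_id.sub this).pow_const 2).neg.div_const 2).exp
  apply (hg.integrableOn).mono' hm.aestronglyMeasurable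
  rw [ae_restrict_iff' measurableSet_Ioi]
  filter_upwards with v hv
  rw [Real.norm_eq_abs, abs_of_pos (Real.exp_pos _), ← Real.exp_add]
  apply Real.exp_le_exp.2
  have hv0 : v ≠ 0 := ne_of_gt hv
  have h1 : (K / v) ^ 2 ≥ 0 := sq_nonneg _
  have : (v - K / v) ^ 2 = v ^ 2 - 2 * K + (K / v) ^ 2 := by
    field_simp; ring
  nlinarith [sq_nonneg (K / v)]

lemma am_glasser {K : ℝ} (hK : 0 ≤ K) :
    ∫ v in Ioi (0:ℝ), Real.exp (-(v - K / v) ^ 2 / 2) = Real.sqrt (2 * π) / 2 := by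
  have gauss : ∫ y : ℝ, Real.exp (-y ^ 2 / 2) = Real.sqrt (2 * π) := by
    have := integral_gaussian (1/2 : ℝ)
    rw [show π / (1/2) = 2 * π by ring] at this
    rw [← this]
    congr 1 with y; ring_nf
  rcases eq_or_lt_of_le hK with hK0 | hK0
  · -- K = 0
    rw [show (∫ v in Ioi (0:ℝ), Real.exp (-(v - K / v) ^ 2 / 2)) =
        ∫ v in Ioi (0:ℝ), Real.exp (-(1/2 : ℝ) * v ^ 2) by
      congr 1 with v; rw [← hK0]; simp; ring_nf]
    rw [integral_gaussian_Ioi, show π / (1/2) = 2 * π by ring]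
  · -- K > 0
    set f : ℝ → ℝ := fun v => v - K / v with hf
    have hderiv : ∀ v ∈ Ioi (0:ℝ), HasDerivWithinAt f (1 + K / v ^ 2) (Ioi 0) v := by
      intro v hv
      have hv0 : v ≠ 0 := ne_of_gt hv
      have h1 : HasDerivAt (fun v : ℝ => v - K / v) (1 - K * (-(v ^ 2)⁻¹)) v := by
        simpa [div_eq_mul_inv] using
          (hasDerivAt_id' v).fun_sub ((hasDerivAt_inv hv0).const_mul K)
      have : 1 - K * (-(v ^ 2)⁻¹) = 1 + K / v ^ 2 := by field_simp; ring
      exact (this ▸ h1).hasDerivWithinAt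
    have hinj : InjOn f (Ioi 0) := by
      apply StrictMonoOn.injOn
      intro x hx y hy hxy
      have hx0 : (0:ℝ) < x := hx
      have hy0 : (0:ℝ) < y := hy
      have : K / y < K / x := div_lt_div_of_pos_left hK0 hx0 hxy
      simp only [hf]; linarith
    have himg : f '' Ioi 0 = univ := by
      apply eq_univ_of_forall
      intro y
      set s := Real.sqrt (y ^ 2 + 4 * K) with hs
      have hs2 : s ^ 2 = y ^ 2 + 4 * K := Real.sq_sqrt (by nlinarith)
      have hsy : -y < s := by
        nlinarith [Real.sqrt_nonneg (y ^ 2 + 4 * K), abs_nonneg y, sq_abs y,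
          neg_abs_le y, le_abs_self y]
      have hvpos : (0:ℝ) < (y + s) / 2 := by linarith
      have hv0 : (y + s) / 2 ≠ 0 := ne_of_gt hvpos
      refine ⟨(y + s) / 2, hvpos, ?_⟩
      have hys : y + s ≠ 0 := by linarith
      simp only [hf]
      rw [div_sub_div _ _ (two_ne_zero) hv0, div_eq_iff (by positivity)]
      nlinarith [hs2]
    have key := integral_image_eq_integral_abs_deriv_smul measurableSet_Ioi hderiv hinj
      (fun y => Real.exp (-y ^ 2 / 2))
    rw [himg, Measure.restrict_univ, gauss] at key
    -- key : √(2π) = ∫ v in Ioi 0, |1 + K/v²| • exp (-(f v)²/2)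
    have keyA : Real.sqrt (2 * π) =
        ∫ v in Ioi (0:ℝ), Real.exp (-(v - K / v) ^ 2 / 2)
          + (K / v ^ 2) * Real.exp (-(v - K / v) ^ 2 / 2) := by
      rw [key]
      apply setIntegral_congr_fun measurableSet_Ioi
      intro v hv
      have hv0 : (0:ℝ) < v := hv
      have : |1 + K / v ^ 2| = 1 + K / v ^ 2 := abs_of_pos (by positivity)
      simp only [smul_eq_mul, this, hf]
      ring
    -- involution v ↦ K / v
    have hK' : K ≠ 0 := ne_of_gt hK0
    have hderiv2 : ∀ v ∈ Ioi (0:ℝ),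
        HasDerivWithinAt (fun v : ℝ => K / v) (-(K / v ^ 2)) (Ioi 0) v := by
      intro v hv
      have hv0 : v ≠ 0 := ne_of_gt hv
      have h1 : HasDerivAt (fun v : ℝ => K / v) (K * (-(v ^ 2)⁻¹)) v := by
        simpa [div_eq_mul_inv] using (hasDerivAt_inv hv0).const_mul K
      have : K * (-(v ^ 2)⁻¹) = -(K / v ^ 2) := by field_simp
      exact (this ▸ h1).hasDerivWithinAt
    have hinj2 : InjOn (fun v : ℝ => K / v) (Ioi 0) := by
      intro x hx y hy hxy
      have hx0 : x ≠ 0 := ne_of_gt hx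
      have hy0 : y ≠ 0 := ne_of_gt hy
      field_simp at hxy
      linarith
    have himg2 : (fun v : ℝ => K / v) '' Ioi 0 = Ioi 0 := by
      apply Subset.antisymm
      · rintro _ ⟨v, hv, rfl⟩
        exact div_pos hK0 hv
      · intro y hy
        have hy0 : (0:ℝ) < y := hy
        exact ⟨K / y, div_pos hK0 hy0, by field_simp⟩
    have ptwise : ∀ v ∈ Ioi (0:ℝ),
        |(-(K / v ^ 2))| • Real.exp (-(K / v - K / (K / v)) ^ 2 / 2)
          = (K / v ^ 2) * Real.exp (-(v - K / v) ^ 2 / 2) := by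
      intro v hv
      have hv0 : v ≠ 0 := ne_of_gt hv
      have h1 : K / (K / v) = v := by field_simp
      have h2 : |(-(K / v ^ 2))| = K / v ^ 2 := by
        rw [abs_neg]
        exact abs_of_pos (div_pos hK0 (by positivity))
      rw [smul_eq_mul, h1, h2, show (K / v - v) ^ 2 = (v - K / v) ^ 2 by ring]
    have keyB := integral_image_eq_integral_abs_deriv_smul measurableSet_Ioi hderiv2 hinj2
      (fun w => Real.exp (-(w - K / w) ^ 2 / 2))
    rw [himg2] at keyB
    have keyB' : ∫ w in Ioi (0:ℝ), Real.exp (-(w - K / w) ^ 2 / 2)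
        = ∫ v in Ioi (0:ℝ), (K / v ^ 2) * Real.exp (-(v - K / v) ^ 2 / 2) := by
      rw [keyB]
      exact setIntegral_congr_fun measurableSet_Ioi ptwise
    have I2 : IntegrableOn (fun v : ℝ => (K / v ^ 2) * Real.exp (-(v - K / v) ^ 2 / 2))
        (Ioi 0) := by
      have := (integrableOn_image_iff_integrableOn_abs_deriv_smul measurableSet_Ioi hderiv2 hinj2
        (fun w => Real.exp (-(w - K / w) ^ 2 / 2)))
      rw [himg2] at this
      exact (this.1 (am_integrable K)).congr_fun ptwise measurableSet_Ioi
    have hsplit : (∫ v in Ioi (0:ℝ), (Real.exp (-(v - K / v) ^ 2 / 2)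
          + (K / v ^ 2) * Real.exp (-(v - K / v) ^ 2 / 2)))
        = (∫ v in Ioi (0:ℝ), Real.exp (-(v - K / v) ^ 2 / 2))
          + ∫ v in Ioi (0:ℝ), (K / v ^ 2) * Real.exp (-(v - K / v) ^ 2 / 2) :=
      integral_add (am_integrable K) I2
    rw [hsplit, ← keyB'] at keyA
    linarith

theorem andrews_mallows_general (a b : ℝ) (ha : 0 < a) :
    ∫ l in Ioi (0:ℝ), a / Real.sqrt (2 * π * l) *
      Real.exp (-(a ^ 2 * l + b ^ 2 / l) / 2) = Real.exp (-(a * |b|)) := by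
  have ha' : a ≠ 0 := ne_of_gt ha
  set K := a * |b| with hKdef
  have hK : 0 ≤ K := mul_nonneg ha.le (abs_nonneg b)
  set f : ℝ → ℝ := fun u => u ^ 2 / a ^ 2 with hf
  have hderiv : ∀ u ∈ Ioi (0:ℝ), HasDerivWithinAt f (2 * u / a ^ 2) (Ioi 0) u := by
    intro u hu
    have h1 : HasDerivAt f (2 * u ^ 1 * (a ^ 2)⁻¹) u := by
      simpa [hf, div_eq_mul_inv] using (hasDerivAt_pow 2 u).mul_const (a ^ 2)⁻¹
    have : 2 * u ^ 1 * (a ^ 2)⁻¹ = 2 * u / a ^ 2 := by ring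
    exact (this ▸ h1).hasDerivWithinAt
  have hinj : InjOn f (Ioi 0) := by
    intro x hx y hy hxy
    have hx0 : (0:ℝ) < x := hx
    have hy0 : (0:ℝ) < y := hy
    have : x ^ 2 = y ^ 2 := by
      have := mul_right_cancel₀ (b := (a ^ 2)⁻¹) (by positivity)
        (by simpa [hf, div_eq_mul_inv] using hxy)
      exact this
    nlinarith
  have himg : f '' Ioi 0 = Ioi 0 := by
    apply Subset.antisymm
    · rintro _ ⟨u, hu, rfl⟩
      have hu0 : (0:ℝ) < u := hu
      have : (0:ℝ) < u ^ 2 / a ^ 2 := by positivity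
      exact this
    · intro y hy
      have hy0 : (0:ℝ) < y := hy
      have hsy : (0:ℝ) < Real.sqrt y := Real.sqrt_pos.2 hy0
      refine ⟨a * Real.sqrt y, mem_Ioi.2 (by positivity), ?_⟩
      simp only [hf]
      rw [mul_pow, Real.sq_sqrt hy0.le]
      field_simp
  have key := integral_image_eq_integral_abs_deriv_smul measurableSet_Ioi hderiv hinj
    (fun l => a / Real.sqrt (2 * π * l) * Real.exp (-(a ^ 2 * l + b ^ 2 / l) / 2))
  rw [himg] at key
  rw [key]
  have sqrt2pi_pos : (0:ℝ) < Real.sqrt (2 * π) := Real.sqrt_pos.2 (by positivity)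
  have ptwise : ∀ u ∈ Ioi (0:ℝ),
      |2 * u / a ^ 2| • (a / Real.sqrt (2 * π * f u) *
        Real.exp (-(a ^ 2 * f u + b ^ 2 / f u) / 2))
      = (2 / Real.sqrt (2 * π) * Real.exp (-K)) * Real.exp (-(u - K / u) ^ 2 / 2) := by
    intro u hu
    have hu0 : (0:ℝ) < u := hu
    have hu' : u ≠ 0 := ne_of_gt hu0
    have hsq : Real.sqrt (2 * π * f u) = Real.sqrt (2 * π) * (u / a) := by
      rw [show 2 * π * f u = (2 * π) * (u / a) ^ 2 by simp only [hf]; ring,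
        Real.sqrt_mul (by positivity), Real.sqrt_sq (by positivity)]
    have habs : |2 * u / a ^ 2| = 2 * u / a ^ 2 := abs_of_pos (by positivity)
    have hexp : -(a ^ 2 * f u + b ^ 2 / f u) / 2 = -(u - K / u) ^ 2 / 2 + (-K) := by
      have h1 : a ^ 2 * f u = u ^ 2 := by simp only [hf]; field_simp
      have h2 : b ^ 2 / f u = K ^ 2 / u ^ 2 := by
        simp only [hf, hKdef]
        rw [mul_pow, sq_abs]
        field_simp
      rw [h1, h2]
      have : (u - K / u) ^ 2 = u ^ 2 - 2 * K + K ^ 2 / u ^ 2 := by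
        field_simp; ring
      rw [this]; ring
    rw [smul_eq_mul, habs, hsq, hexp, Real.exp_add]
    field_simp
  rw [setIntegral_congr_fun measurableSet_Ioi ptwise, integral_const_mul, am_glasser hK]
  field_simp
end

section
/- Let y ∈ {−1, 1} and f ∈ ℝ. Then the integral over λ from 0 to ∞ of (2πλ)^(−1/2) · exp(−(1 + λ − y·f)²/(2λ)) dλ equals exp(−2·max{1 − y·f, 0}), i.e. the binary SVM pseudo-likelihood factor equals the exponentiated negative (twice) hinge loss. -/
open MeasureTheory Real Set

lemma glasser (b : ℝ) (hb : 0 ≤ b) :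
    ∫ t in Ioi (0:ℝ), Real.exp (-(t - b/t)^2 / 2) = Real.sqrt (2*π) / 2 := by
  rcases eq_or_lt_of_le hb with rfl | hb
  · simp only [zero_div, sub_zero]
    have := integral_gaussian_Ioi (1/2)
    rw [show π / (1/2) = 2 * π by ring] at this
    rw [← this]
    refine setIntegral_congr_fun measurableSet_Ioi fun t ht => ?_
    rw [neg_div]
    ring_nf
  · -- b > 0
    set g : ℝ → ℝ := fun t => t - b / t with hg
    have hderiv : ∀ t ∈ Ioi (0:ℝ), HasDerivWithinAt g (1 + b / t ^ 2) (Ioi 0) t := by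
      intro t ht
      have ht' : t ≠ 0 := (mem_Ioi.mp ht).ne'
      have h1 : HasDerivAt g (1 - b * (-(t^2)⁻¹)) t := by
        have h0 : HasDerivAt (fun x => x - b * x⁻¹) (1 - b * (-(t^2)⁻¹)) t :=
          (hasDerivAt_id' t).sub ((hasDerivAt_inv ht').const_mul b)
        rw [hg]; simp only [div_eq_mul_inv]; exact h0
      have : (1 : ℝ) - b * (-(t^2)⁻¹) = 1 + b / t ^ 2 := by field_simp; ring
      rw [this] at h1
      exact h1.hasDerivWithinAt
    have hinj : InjOn g (Ioi 0) := by
      apply StrictMonoOn.injOn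
      intro x hx y hy hxy
      have : b / y < b / x := div_lt_div_of_pos_left hb (mem_Ioi.mp hx) hxy
      simp only [hg]
      linarith
    have himg : g '' Ioi 0 = univ := by
      ext u
      simp only [mem_univ, iff_true, mem_image]
      have hs4 : (0:ℝ) ≤ u ^ 2 + 4 * b := by positivity
      have hs2 : Real.sqrt (u ^ 2 + 4 * b) ^ 2 = u ^ 2 + 4 * b := sq_sqrt hs4
      have habs : |u| < Real.sqrt (u ^ 2 + 4 * b) := by
        rw [← Real.sqrt_sq_eq_abs]
        exact Real.sqrt_lt_sqrt (sq_nonneg u) (by linarith)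
      have htpos : 0 < (u + Real.sqrt (u ^ 2 + 4 * b)) / 2 := by
        have := neg_abs_le u
        linarith
      refine ⟨(u + Real.sqrt (u ^ 2 + 4 * b)) / 2, htpos, ?_⟩
      have hpos2 : 0 < u + Real.sqrt (u ^ 2 + 4 * b) := by
        have := neg_abs_le u; linarith
      simp only [hg]
      have hb' : b / ((u + Real.sqrt (u ^ 2 + 4 * b)) / 2)
          = (Real.sqrt (u ^ 2 + 4 * b) - u) / 2 := by
        rw [div_eq_iff htpos.ne']
        nlinarith [hs2]
      rw [hb']
      ring
    -- main substitution
    have hmain := integral_image_eq_integral_abs_deriv_smul measurableSet_Ioi hderiv hinj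
      (fun u => Real.exp (-u ^ 2 / 2))
    rw [himg] at hmain
    have hgauss : ∫ u : ℝ, Real.exp (-u ^ 2 / 2) = Real.sqrt (2 * π) := by
      have := integral_gaussian (1/2)
      rw [show π / (1/2) = 2 * π by ring] at this
      rw [← this]
      congr 1 with u
      rw [neg_div]
      ring_nf
    rw [setIntegral_univ, hgauss] at hmain
    have habs' : ∀ t ∈ Ioi (0:ℝ), |1 + b / t ^ 2| • Real.exp (-(g t) ^ 2 / 2)
        = Real.exp (-(t - b/t) ^ 2 / 2) + (b / t ^ 2) * Real.exp (-(t - b/t) ^ 2 / 2) := by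
      intro t ht
      have ht0 : (0:ℝ) < t := mem_Ioi.mp ht
      have : |1 + b / t ^ 2| = 1 + b / t ^ 2 := abs_of_pos (by positivity)
      rw [smul_eq_mul, this, hg]
      ring
    rw [setIntegral_congr_fun measurableSet_Ioi habs'] at hmain
    -- integrability
    have hintsum : IntegrableOn (fun t => |1 + b / t ^ 2| • Real.exp (-(g t) ^ 2 / 2)) (Ioi 0) := by
      have h0 : Integrable (fun u : ℝ => Real.exp (-u ^ 2 / 2)) := by
        have := integrable_exp_neg_mul_sq (show (0:ℝ) < 1/2 by norm_num)
        refine this.congr ?_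
        filter_upwards with u
        rw [neg_div]; ring_nf
      have h1 : IntegrableOn (fun u : ℝ => Real.exp (-u ^ 2 / 2)) (g '' Ioi 0) := by
        rw [himg]; exact h0.integrableOn
      exact (integrableOn_image_iff_integrableOn_abs_deriv_smul measurableSet_Ioi hderiv hinj
        (fun u => Real.exp (-u ^ 2 / 2))).mp h1
    have hcont : ContinuousOn (fun t : ℝ => Real.exp (-(t - b/t) ^ 2 / 2)) (Ioi 0) := by
      apply ContinuousOn.rexp
      apply ContinuousOn.div_const
      apply ContinuousOn.neg
      apply ContinuousOn.pow
      exact continuousOn_id.sub (continuousOn_const.div continuousOn_id (fun t ht => (mem_Ioi.mp ht).ne'))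
    have hI_int : IntegrableOn (fun t => Real.exp (-(t - b/t) ^ 2 / 2)) (Ioi 0) := by
      apply Integrable.mono' hintsum (hcont.aestronglyMeasurable measurableSet_Ioi)
      filter_upwards [ae_restrict_mem measurableSet_Ioi] with t ht
      have ht0 : (0:ℝ) < t := mem_Ioi.mp ht
      rw [norm_eq_abs, abs_of_pos (Real.exp_pos _), smul_eq_mul, hg]
      have h1 : |1 + b / t ^ 2| = 1 + b / t ^ 2 := abs_of_pos (by positivity)
      rw [h1]
      nlinarith [Real.exp_pos (-(t - b/t) ^ 2 / 2), div_nonneg hb.le (sq_nonneg t)]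
    have hJ_int : IntegrableOn (fun t => (b / t ^ 2) * Real.exp (-(t - b/t) ^ 2 / 2)) (Ioi 0) := by
      have hsum := hintsum.congr_fun habs' measurableSet_Ioi
      have h2 : IntegrableOn (((fun t => Real.exp (-(t - b/t) ^ 2 / 2) + (b / t ^ 2) * Real.exp (-(t - b/t) ^ 2 / 2))) - (fun t => Real.exp (-(t - b/t) ^ 2 / 2))) (Ioi 0) := hsum.sub hI_int
      refine h2.congr_fun (fun t ht => by simp [Pi.sub_apply]) measurableSet_Ioi
    rw [integral_add hI_int hJ_int] at hmain
    -- second substitution: J = I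
    have hderiv2 : ∀ t ∈ Ioi (0:ℝ), HasDerivWithinAt (fun t => b / t) (b * (-(t^2)⁻¹)) (Ioi 0) t := by
      intro t ht
      have ht' : t ≠ 0 := (mem_Ioi.mp ht).ne'
      simpa [div_eq_mul_inv] using ((hasDerivAt_inv ht').const_mul b).hasDerivWithinAt
    have hinj2 : InjOn (fun t => b / t) (Ioi 0) := by
      intro x hx y hy e
      have hx0 : (0:ℝ) < x := mem_Ioi.mp hx
      have hy0 : (0:ℝ) < y := mem_Ioi.mp hy
      field_simp at e
      linarith
    have himg2 : (fun t => b / t) '' Ioi 0 = Ioi 0 := by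
      ext u
      simp only [mem_image, mem_Ioi]
      constructor
      · rintro ⟨t, ht, rfl⟩; exact div_pos hb ht
      · intro hu; exact ⟨b / u, div_pos hb hu, by field_simp⟩
    have hsub2 := integral_image_eq_integral_abs_deriv_smul measurableSet_Ioi hderiv2 hinj2
      (fun t => Real.exp (-(t - b/t) ^ 2 / 2))
    rw [himg2] at hsub2
    have heq2 : ∀ t ∈ Ioi (0:ℝ), |b * (-(t^2)⁻¹)| • Real.exp (-((b/t) - b/(b/t)) ^ 2 / 2)
        = (b / t ^ 2) * Real.exp (-(t - b/t) ^ 2 / 2) := by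
      intro t ht
      have ht0 : (0:ℝ) < t := mem_Ioi.mp ht
      have h1 : b / (b / t) = t := by field_simp
      have h2 : |b * (-(t^2)⁻¹)| = b / t ^ 2 := by
        rw [abs_mul, abs_of_pos hb, abs_neg, abs_inv, abs_of_pos (by positivity : (0:ℝ) < t^2)]
        ring
      rw [smul_eq_mul, h1, h2]
      congr 2
      ring
    rw [setIntegral_congr_fun measurableSet_Ioi heq2] at hsub2
    -- hsub2 : I = J, hmain : √(2π) = I + J
    linarith [hsub2, hmain]
lemma key_integral (b : ℝ) (hb : 0 ≤ b) :
    ∫ l in Ioi (0:ℝ), (Real.sqrt l)⁻¹ * Real.exp (-(b^2/(2*l) + l/2))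
      = Real.sqrt (2*π) * Real.exp (-b) := by
  have hsub := integral_comp_rpow_Ioi_of_pos (p := 2)
    (g := fun l => (Real.sqrt l)⁻¹ * Real.exp (-(b^2/(2*l) + l/2))) zero_lt_two
  rw [← hsub]
  have heq : ∀ t ∈ Ioi (0:ℝ),
      ((2:ℝ) * t ^ ((2:ℝ) - 1)) • ((Real.sqrt (t ^ (2:ℝ)))⁻¹
        * Real.exp (-(b^2/(2*(t ^ (2:ℝ))) + (t ^ (2:ℝ))/2)))
      = (2 * Real.exp (-b)) * Real.exp (-(t - b/t)^2 / 2) := by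
    intro t ht
    have ht0 : (0:ℝ) < t := mem_Ioi.mp ht
    have h2 : t ^ (2:ℝ) = t ^ 2 := by
      rw [show ((2:ℝ) = ((2:ℕ):ℝ)) by norm_num, Real.rpow_natCast]
    have h1 : t ^ ((2:ℝ) - 1) = t := by
      norm_num
    have hsq : Real.sqrt (t ^ 2) = t := by
      rw [Real.sqrt_sq ht0.le]
    have hexp : Real.exp (-b) * Real.exp (-(t - b/t)^2 / 2)
        = Real.exp (-(b^2/(2*t^2) + t^2/2)) := by
      rw [← Real.exp_add]
      congr 1
      field_simp
      ring
    rw [smul_eq_mul, h2, h1, hsq, mul_assoc 2 (Real.exp (-b)), hexp]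
    field_simp
  rw [setIntegral_congr_fun measurableSet_Ioi heq, integral_const_mul, glasser b hb]
  rw [mul_comm (Real.sqrt (2*π))]
  ring

theorem binary_svm_pseudo_likelihood (y f : ℝ) (hy : y = -1 ∨ y = 1) :
    ∫ l in Ioi (0:ℝ), (2 * π * l) ^ (-(1:ℝ)/2) *
      Real.exp (-(1 + l - y * f) ^ 2 / (2 * l)) =
      Real.exp (-2 * max (1 - y * f) 0) := by
  set a : ℝ := 1 - y * f with ha
  have heq : ∀ l ∈ Ioi (0:ℝ),
      (2 * π * l) ^ (-(1:ℝ)/2) * Real.exp (-(1 + l - y * f) ^ 2 / (2 * l))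
      = ((Real.sqrt (2*π))⁻¹ * Real.exp (-a)) *
        ((Real.sqrt l)⁻¹ * Real.exp (-(|a|^2/(2*l) + l/2))) := by
    intro l hl
    have hl0 : (0:ℝ) < l := mem_Ioi.mp hl
    have h2pl : (0:ℝ) ≤ 2 * π * l := by positivity
    have hrpow : (2 * π * l) ^ (-(1:ℝ)/2) = (Real.sqrt (2*π))⁻¹ * (Real.sqrt l)⁻¹ := by
      rw [neg_div, Real.rpow_neg h2pl, ← Real.sqrt_eq_rpow, Real.sqrt_mul (by positivity), mul_inv]
    have hexp : Real.exp (-(1 + l - y * f) ^ 2 / (2 * l))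
        = Real.exp (-a) * Real.exp (-(|a|^2/(2*l) + l/2)) := by
      rw [← Real.exp_add]
      congr 1
      have h1 : 1 + l - y * f = a + l := by rw [ha]; ring
      rw [h1, sq_abs]
      field_simp
      ring
    rw [hrpow, hexp]
    ring
  rw [setIntegral_congr_fun measurableSet_Ioi heq, integral_const_mul,
    key_integral |a| (abs_nonneg a)]
  have hsqrt : Real.sqrt (2*π) ≠ 0 := by positivity
  have h : (Real.sqrt (2*π))⁻¹ * Real.exp (-a) * (Real.sqrt (2*π) * Real.exp (-|a|))
      = Real.exp (-a) * Real.exp (-|a|) := by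
    field_simp
  rw [h, ← Real.exp_add]
  congr 1
  rcases le_or_gt a 0 with h | h
  · rw [abs_of_nonpos h, max_eq_right h]; ring
  · rw [abs_of_pos h, max_eq_left h.le]; ring
end
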